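/- Unique zero and sign pattern of Ξ₁ (step in the proof of Lemma 2). Let λ > 0 and c > 0, define Ξ₁(G) := 2λ · ∫_G^∞ e^{−λg}/ln(1 + c·g) dg − e^{−λG}/ln(1 + c·G) for G > 0, and let x† be the unique zero in (0, ∞) of x ↦ c − λ·(1 + c·x)·ln(1 + c·x). Then there exists a unique G‡ ∈ (0, ∞) with Ξ₁(G‡) = 0; moreover G‡ ≤ x†, Ξ₁(G) < 0 for 0 < G < G‡, and Ξ₁(G) > 0 for G > G‡. -/

import Mathlib

open MeasureTheory Set

namespace XiLem2Aux

open Real Filter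

noncomputable def f (lam c : ℝ) (g : ℝ) : ℝ := Real.exp (-lam * g) / Real.log (1 + c * g)
noncomputable def F (lam c : ℝ) (G : ℝ) : ℝ := ∫ g in Set.Ioi G, f lam c g
noncomputable def Xi (lam c : ℝ) (G : ℝ) : ℝ := 2 * lam * F lam c G - f lam c G
noncomputable def psi (lam c : ℝ) (g : ℝ) : ℝ := c - lam * (1 + c * g) * Real.log (1 + c * g)
noncomputable def fd (lam c : ℝ) (g : ℝ) : ℝ :=
  (-lam * Real.exp (-lam * g) * Real.log (1 + c * g)
    - Real.exp (-lam * g) * (c / (1 + c * g))) / (Real.log (1 + c * g)) ^ 2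

variable {lam c : ℝ}

lemma log_pos' (hc : 0 < c) {g : ℝ} (hg : 0 < g) : 0 < Real.log (1 + c * g) :=
  Real.log_pos (by nlinarith)

lemma f_pos (hc : 0 < c) {g : ℝ} (hg : 0 < g) : 0 < f lam c g :=
  div_pos (Real.exp_pos _) (log_pos' hc hg)

lemma f_contAt (hc : 0 < c) {g : ℝ} (hg : 0 < g) : ContinuousAt (f lam c) g := by
  have h1 : (0:ℝ) < 1 + c * g := by positivity
  exact (Real.continuous_exp.comp (continuous_const.mul continuous_id)).continuousAt.div
    ((Real.continuousAt_log (by nlinarith)).comp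
      (by fun_prop : ContinuousAt (fun g : ℝ => 1 + c * g) g))
    (ne_of_gt (log_pos' hc hg))

lemma f_contOn (hc : 0 < c) {G : ℝ} (hG : 0 ≤ G) : ContinuousOn (f lam c) (Set.Ioi G) :=
  fun _ hx => ((f_contAt hc (lt_of_le_of_lt hG hx)).continuousWithinAt)

lemma f_le (hlam : 0 < lam) (hc : 0 < c) {G : ℝ} (hG : 0 < G) {g : ℝ} (hg : g ∈ Set.Ioi G) :
    ‖f lam c g‖ ≤ Real.exp (-lam * g) / Real.log (1 + c * G) := by
  have hg' : 0 < g := lt_trans hG hg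
  rw [Real.norm_eq_abs, abs_of_pos (f_pos hc hg')]
  apply div_le_div_of_nonneg_left (Real.exp_pos _).le (log_pos' hc hG)
  apply Real.log_le_log (by nlinarith)
  nlinarith [le_of_lt hg.out]

lemma f_integrable (hlam : 0 < lam) (hc : 0 < c) {G : ℝ} (hG : 0 < G) :
    IntegrableOn (f lam c) (Set.Ioi G) := by
  have hb : IntegrableOn (fun g => Real.exp (-lam * g) / Real.log (1 + c * G)) (Set.Ioi G) :=
    (exp_neg_integrableOn_Ioi G hlam).div_const _
  refine Integrable.mono' hb ?_ ?_
  · exact ((f_contOn hc hG.le)).aestronglyMeasurable measurableSet_Ioi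
  · exact (ae_restrict_iff' measurableSet_Ioi).2 (ae_of_all _ fun g hg => f_le hlam hc hG hg)

lemma hasDerivAt_f (hc : 0 < c) {g : ℝ} (hg : 0 < g) :
    HasDerivAt (f lam c) (fd lam c g) g := by
  have h1 : (0:ℝ) < 1 + c * g := by positivity
  have hL : 0 < Real.log (1 + c * g) := Real.log_pos (by nlinarith)
  have hexp : HasDerivAt (fun x : ℝ => Real.exp (-lam * x)) (-lam * Real.exp (-lam * g)) g := by
    have := (Real.hasDerivAt_exp (-lam * g)).comp g ((hasDerivAt_id g).const_mul (-lam))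
    simpa [Function.comp_def, mul_comm] using this
  have hlog : HasDerivAt (fun x : ℝ => Real.log (1 + c * x)) (c / (1 + c * g)) g := by
    have hin : HasDerivAt (fun x : ℝ => 1 + c * x) c g := by
      simpa using ((hasDerivAt_id g).const_mul c).const_add 1
    simpa [div_eq_mul_inv, mul_comm, Function.comp_def] using (Real.hasDerivAt_log (ne_of_gt h1)).comp g hin
  have := hexp.div hlog (ne_of_gt hL)
  unfold f fd
  exact this

lemma hasDerivAt_psi' (hc : 0 < c) {g : ℝ} (hg : 0 < g) :
    HasDerivAt (psi lam c) (-(lam * (c * Real.log (1 + c * g) + c))) g := by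
  have h1 : (0:ℝ) < 1 + c * g := by positivity
  have hin : HasDerivAt (fun x : ℝ => 1 + c * x) c g := by
    simpa using ((hasDerivAt_id g).const_mul c).const_add 1
  have hlog : HasDerivAt (fun x : ℝ => Real.log (1 + c * x)) (c / (1 + c * g)) g := by
    simpa [div_eq_mul_inv, mul_comm, Function.comp_def] using (Real.hasDerivAt_log (ne_of_gt h1)).comp g hin
  have h := ((hin.mul hlog).const_mul lam).const_sub c
  have heq : psi lam c
      = fun x => c - lam * ((1 + c * x) * Real.log (1 + c * x)) := by
    funext x; unfold psi; ring
  rw [heq]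
  rw [mul_div_cancel₀ _ (ne_of_gt h1)] at h
  exact h

lemma f_tendsto_zero (hlam : 0 < lam) (hc : 0 < c) :
    Tendsto (f lam c) atTop (nhds 0) := by
  have hb : Tendsto (fun g => Real.exp (-lam * g) / Real.log (1 + c * 1)) atTop (nhds 0) := by
    have : Tendsto (fun g : ℝ => Real.exp (-lam * g)) atTop (nhds 0) := by
      have h2 : Tendsto (fun g : ℝ => lam * g) atTop atTop := by
        simpa using tendsto_id.const_mul_atTop hlam
      simpa [Function.comp_def, neg_mul] using Real.tendsto_exp_neg_atTop_nhds_zero.comp h2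
    simpa using this.div_const (Real.log (1 + c * 1))
  refine squeeze_zero' ?_ ?_ hb
  · filter_upwards [eventually_gt_atTop 0] with g hg
    exact le_of_lt (div_pos (Real.exp_pos _) (Real.log_pos (by nlinarith)))
  · filter_upwards [eventually_ge_atTop 1] with g hg
    apply div_le_div_of_nonneg_left (Real.exp_pos _).le (Real.log_pos (by nlinarith))
    apply Real.log_le_log (by nlinarith)
    nlinarith

lemma fd_contAt (hc : 0 < c) {g : ℝ} (hg : 0 < g) : ContinuousAt (fd lam c) g := by
  have h1 : (0:ℝ) < 1 + c * g := by positivity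
  have hL : Real.log (1 + c * g) ≠ 0 := ne_of_gt (log_pos' hc hg)
  have hcont1 : ContinuousAt (fun x : ℝ => 1 + c * x) g := by fun_prop
  have hlog : ContinuousAt (fun x : ℝ => Real.log (1 + c * x)) g :=
    hcont1.log (ne_of_gt h1)
  have hexp : ContinuousAt (fun x : ℝ => Real.exp (-lam * x)) g := by fun_prop
  exact (((hexp.const_mul (-lam)).mul hlog).sub
      (hexp.mul ((continuousAt_const.div hcont1 (ne_of_gt h1))))).div (hlog.pow 2)
    (pow_ne_zero 2 hL)

lemma fd_integrable (hlam : 0 < lam) (hc : 0 < c) {G : ℝ} (hG : 0 < G) :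
    IntegrableOn (fd lam c) (Set.Ioi G) := by
  set LG := Real.log (1 + c * G) with hLGdef
  have hLG : 0 < LG := log_pos' hc hG
  have hb : IntegrableOn (fun g => (lam / LG + c / LG ^ 2) * Real.exp (-lam * g)) (Set.Ioi G) :=
    (exp_neg_integrableOn_Ioi G hlam).const_mul _
  refine Integrable.mono' hb ?_ ?_
  · exact (continuousOn_of_forall_continuousAt fun g hg =>
      fd_contAt hc (lt_trans hG hg)).aestronglyMeasurable measurableSet_Ioi
  · refine (ae_restrict_iff' measurableSet_Ioi).2 (ae_of_all _ fun g hg => ?_)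
    have hg' : 0 < g := lt_trans hG hg
    have h1 : (0:ℝ) < 1 + c * g := by positivity
    have hL : 0 < Real.log (1 + c * g) := log_pos' hc hg'
    have hLGL : LG ≤ Real.log (1 + c * g) := by
      apply Real.log_le_log (by positivity); nlinarith [le_of_lt hg.out]
    have he : 0 < Real.exp (-lam * g) := Real.exp_pos _
    rw [fd, Real.norm_eq_abs, abs_div, abs_of_pos (by positivity : (0:ℝ) < Real.log (1+c*g) ^ 2)]
    have habs : |(-lam * Real.exp (-lam * g) * Real.log (1 + c * g)
        - Real.exp (-lam * g) * (c / (1 + c * g)))|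
        = lam * Real.exp (-lam * g) * Real.log (1 + c * g)
          + Real.exp (-lam * g) * (c / (1 + c * g)) := by
      have hnonpos : -lam * Real.exp (-lam * g) * Real.log (1 + c * g)
          - Real.exp (-lam * g) * (c / (1 + c * g)) ≤ 0 := by
        nlinarith [mul_pos (mul_pos hlam he) hL, mul_pos he (div_pos hc h1)]
      rw [abs_of_nonpos hnonpos]
      ring
    rw [habs]
    have key : (lam * Real.exp (-lam * g) * Real.log (1 + c * g)
        + Real.exp (-lam * g) * (c / (1 + c * g))) / Real.log (1 + c * g) ^ 2
        = lam * Real.exp (-lam * g) / Real.log (1 + c * g)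
          + Real.exp (-lam * g) * c / ((1 + c * g) * Real.log (1 + c * g) ^ 2) := by
      field_simp
    have hR : (lam / LG + c / LG ^ 2) * Real.exp (-lam * g)
        = lam * Real.exp (-lam * g) / LG + Real.exp (-lam * g) * c / LG ^ 2 := by ring
    rw [key, hR]
    have ineq1 : lam * Real.exp (-lam * g) / Real.log (1 + c * g)
        ≤ lam * Real.exp (-lam * g) / LG :=
      div_le_div_of_nonneg_left (by positivity) hLG hLGL
    have ineq2 : Real.exp (-lam * g) * c / ((1 + c * g) * Real.log (1 + c * g) ^ 2)
        ≤ Real.exp (-lam * g) * c / LG ^ 2 :=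
      div_le_div_of_nonneg_left (by positivity) (by positivity)
        (by nlinarith [mul_le_mul hLGL hLGL hLG.le hL.le, mul_pos hc hg',
          sq_nonneg (Real.log (1 + c * g))])
    exact add_le_add ineq1 ineq2

lemma F_split (hlam : 0 < lam) (hc : 0 < c) {a G : ℝ} (ha : 0 < a) (haG : a ≤ G) :
    F lam c a = (∫ g in Set.Ioc a G, f lam c g) + F lam c G := by
  have hG : 0 < G := lt_of_lt_of_le ha haG
  rw [F, F, ← Set.Ioc_union_Ioi_eq_Ioi haG,
    setIntegral_union (Set.Ioc_disjoint_Ioi le_rfl) measurableSet_Ioi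
      ((f_integrable hlam hc ha).mono Set.Ioc_subset_Ioi_self le_rfl)
      (f_integrable hlam hc hG)]

lemma F_eq (hlam : 0 < lam) (hc : 0 < c) {a G : ℝ} (ha : 0 < a) (hG : 0 < G) :
    F lam c G = F lam c a - ∫ t in a..G, f lam c t := by
  rcases le_or_gt a G with h | h
  · rw [intervalIntegral.integral_of_le h, F_split hlam hc ha h]
    ring
  · rw [intervalIntegral.integral_symm G a, intervalIntegral.integral_of_le h.le,
      F_split hlam hc hG h.le]
    ring

lemma hasDerivAt_F (hlam : 0 < lam) (hc : 0 < c) {G : ℝ} (hG : 0 < G) :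
    HasDerivAt (F lam c) (-(f lam c G)) G := by
  have ha : (0:ℝ) < G / 2 := by linarith
  have hii : IntervalIntegrable (f lam c) volume (G / 2) G := by
    rw [intervalIntegrable_iff_integrableOn_Ioo_of_le (by linarith)]
    exact ((f_integrable hlam hc ha).mono Set.Ioo_subset_Ioi_self le_rfl)
  have hint : HasDerivAt (fun u => ∫ t in (G/2)..u, f lam c t) (f lam c G) G := by
    refine intervalIntegral.integral_hasDerivAt_right hii ?_ (f_contAt hc hG)
    exact (ContinuousAt.stronglyMeasurableAtFilter isOpen_Ioi
      (fun x hx => f_contAt hc hx) G hG)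
  have hev : F lam c =ᶠ[nhds G] fun u => F lam c (G/2) - ∫ t in (G/2)..u, f lam c t := by
    filter_upwards [Ioi_mem_nhds hG] with u hu
    exact F_eq hlam hc ha hu
  exact (((hasDerivAt_const G (F lam c (G/2))).sub hint).congr_of_eventuallyEq hev).congr_deriv
    (by ring)

lemma hasDerivAt_Xi (hlam : 0 < lam) (hc : 0 < c) {G : ℝ} (hG : 0 < G) :
    HasDerivAt (Xi lam c)
      (Real.exp (-lam * G) * psi lam c G / ((1 + c * G) * (Real.log (1 + c * G)) ^ 2)) G := by
  have h1 : (0:ℝ) < 1 + c * G := by positivity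
  have hL : 0 < Real.log (1 + c * G) := log_pos' hc hG
  have h := ((hasDerivAt_F hlam hc hG).const_mul (2 * lam)).sub
    (hasDerivAt_f (lam := lam) hc hG)
  have heq : 2 * lam * -(f lam c G) - fd lam c G
      = Real.exp (-lam * G) * psi lam c G / ((1 + c * G) * (Real.log (1 + c * G)) ^ 2) := by
    rw [f, fd, psi]
    field_simp
    ring
  rw [heq] at h
  exact h

lemma psi_strictAnti (hlam : 0 < lam) (hc : 0 < c) : StrictAntiOn (psi lam c) (Set.Ici 0) := by
  apply strictAntiOn_of_deriv_neg (convex_Ici 0)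
  · intro x hx
    have h1 : (0:ℝ) < 1 + c * x := by nlinarith [hx.out]
    exact (continuousAt_const.sub ((continuousAt_const.mul (by fun_prop)).mul
      ((by fun_prop : ContinuousAt (fun y : ℝ => 1 + c * y) x).log
        (ne_of_gt h1)))).continuousWithinAt
  · intro x hx
    rw [interior_Ici] at hx
    rw [(hasDerivAt_psi' hc hx).deriv]
    have := log_pos' hc hx
    nlinarith [mul_pos hlam (add_pos (mul_pos hc this) hc)]

lemma psi_sign_pos (hlam : 0 < lam) (hc : 0 < c) {xd : ℝ} (hxd : 0 < xd)
    (hzero : psi lam c xd = 0) {g : ℝ} (hg : 0 < g) (hgxd : g < xd) : 0 < psi lam c g := by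
  have := psi_strictAnti hlam hc (le_of_lt hg) (le_of_lt hxd) hgxd
  linarith

lemma psi_sign_neg (hlam : 0 < lam) (hc : 0 < c) {xd : ℝ} (hxd : 0 < xd)
    (hzero : psi lam c xd = 0) {g : ℝ} (hg : xd < g) : psi lam c g < 0 := by
  have := psi_strictAnti hlam hc (le_of_lt hxd) (le_of_lt (lt_trans hxd hg)) hg
  linarith

lemma Xi_strictMono (hlam : 0 < lam) (hc : 0 < c) {xd : ℝ} (hxd : 0 < xd)
    (hzero : psi lam c xd = 0) : StrictMonoOn (Xi lam c) (Set.Ioc 0 xd) := by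
  apply strictMonoOn_of_deriv_pos (convex_Ioc 0 xd)
  · exact fun x hx => (hasDerivAt_Xi hlam hc hx.1).continuousAt.continuousWithinAt
  · intro x hx
    rw [interior_Ioc] at hx
    rw [(hasDerivAt_Xi hlam hc hx.1).deriv]
    have h1 : (0:ℝ) < 1 + c * x := by nlinarith [hx.1]
    have hL : 0 < Real.log (1 + c * x) := log_pos' hc hx.1
    have hpsi : 0 < psi lam c x := psi_sign_pos hlam hc hxd hzero hx.1 hx.2
    positivity

lemma h_eq (hc : 0 < c) {g : ℝ} (hg : 0 < g) :
    2 * lam * f lam c g + fd lam c g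
      = Real.exp (-lam * g) * (-(psi lam c g)) / ((1 + c * g) * (Real.log (1 + c * g)) ^ 2) := by
  have h1 : (0:ℝ) < 1 + c * g := by positivity
  have hL : 0 < Real.log (1 + c * g) := log_pos' hc hg
  rw [f, fd, psi]
  field_simp
  ring

lemma h_pos (hlam : 0 < lam) (hc : 0 < c) {xd : ℝ} (hxd : 0 < xd)
    (hzero : psi lam c xd = 0) {g : ℝ} (hg : xd < g) :
    0 < 2 * lam * f lam c g + fd lam c g := by
  have hg' : 0 < g := lt_trans hxd hg
  rw [h_eq hc hg']
  have h1 : (0:ℝ) < 1 + c * g := by positivity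
  have hL : 0 < Real.log (1 + c * g) := log_pos' hc hg'
  have hpsi : 0 < -(psi lam c g) := by linarith [psi_sign_neg hlam hc hxd hzero hg]
  positivity

lemma Xi_eq_integral (hlam : 0 < lam) (hc : 0 < c) {G : ℝ} (hG : 0 < G) :
    Xi lam c G = ∫ g in Set.Ioi G, (2 * lam * f lam c g + fd lam c g) := by
  have hfd : (∫ g in Set.Ioi G, fd lam c g) = 0 - f lam c G := by
    apply integral_Ioi_of_hasDerivAt_of_tendsto
      ((f_contAt hc hG).continuousWithinAt)
      (fun x hx => hasDerivAt_f hc (lt_trans hG hx))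
      (fd_integrable hlam hc hG) (f_tendsto_zero hlam hc)
  rw [integral_add ((f_integrable hlam hc hG).const_mul _) (fd_integrable hlam hc hG),
    MeasureTheory.integral_const_mul, hfd]
  rw [Xi, F]
  ring

lemma Xi_pos_of_ge (hlam : 0 < lam) (hc : 0 < c) {xd : ℝ} (hxd : 0 < xd)
    (hzero : psi lam c xd = 0) {G : ℝ} (hG : xd ≤ G) : 0 < Xi lam c G := by
  have hG0 : 0 < G := lt_of_lt_of_le hxd hG
  set h : ℝ → ℝ := fun g => 2 * lam * f lam c g + fd lam c g with hh
  have hint : IntegrableOn h (Set.Ioi G) :=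
    ((f_integrable hlam hc hG0).const_mul _).add (fd_integrable hlam hc hG0)
  rw [Xi_eq_integral hlam hc hG0, ← Set.Ioc_union_Ioi_eq_Ioi (by linarith : G ≤ G + 1),
    setIntegral_union (Set.Ioc_disjoint_Ioi le_rfl) measurableSet_Ioi
      (hint.mono Set.Ioc_subset_Ioi_self le_rfl)
      (hint.mono (Set.Ioi_subset_Ioi (by linarith)) le_rfl)]
  have h2 : 0 ≤ ∫ g in Set.Ioi (G + 1), h g := by
    apply setIntegral_nonneg measurableSet_Ioi
    intro g hg
    exact le_of_lt (h_pos hlam hc hxd hzero (by linarith [hg.out]))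
  have h1 : 0 < ∫ g in Set.Ioc G (G + 1), h g := by
    rw [← intervalIntegral.integral_of_le (by linarith : G ≤ G + 1)]
    apply intervalIntegral.intervalIntegral_pos_of_pos_on
    · rw [intervalIntegrable_iff_integrableOn_Ioc_of_le (by linarith)]
      exact hint.mono Set.Ioc_subset_Ioi_self le_rfl
    · intro x hx
      exact h_pos hlam hc hxd hzero (lt_of_le_of_lt hG hx.1)
    · linarith
  linarith

lemma log_lb (hc : 0 < c) {s : ℝ} (hs : 0 < s) :
    c * s / (1 + c * s) ≤ Real.log (1 + c * s) := by
  have h1 : (0:ℝ) < 1 + c * s := by positivity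
  have := Real.one_sub_inv_le_log_of_pos h1
  have h2 : 1 - (1 + c * s)⁻¹ = c * s / (1 + c * s) := by field_simp; ring
  linarith [h2 ▸ this]

lemma log_ub (hc : 0 < c) {s : ℝ} (hs : 0 < s) : Real.log (1 + c * s) ≤ c * s := by
  have h1 : (0:ℝ) < 1 + c * s := by positivity
  have := Real.log_le_sub_one_of_pos h1
  linarith

lemma f_anti (hlam : 0 < lam) (hc : 0 < c) {x y : ℝ} (hx : 0 < x) (hxy : x ≤ y) :
    f lam c y ≤ f lam c x := by
  have hy : 0 < y := lt_of_lt_of_le hx hxy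
  apply div_le_div₀ (Real.exp_pos _).le (Real.exp_le_exp.2 (by nlinarith)) (log_pos' hc hx)
  exact Real.log_le_log (by positivity) (by nlinarith)

lemma integral_exp_Ioi (hlam : 0 < lam) (b : ℝ) :
    (∫ g in Set.Ioi b, Real.exp (-lam * g)) = Real.exp (-lam * b) / lam := by
  have h : ∀ x ∈ Set.Ioi b, HasDerivAt (fun g => -Real.exp (-lam * g) / lam)
      (Real.exp (-lam * x)) x := by
    intro x _
    have hexp : HasDerivAt (fun g : ℝ => Real.exp (-lam * g)) (-lam * Real.exp (-lam * x)) x := by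
      have := (Real.hasDerivAt_exp (-lam * x)).comp x ((hasDerivAt_id x).const_mul (-lam))
      simpa [Function.comp_def, mul_comm] using this
    have := (hexp.neg).div_const lam
    rw [neg_mul, neg_neg, mul_div_right_comm, div_self hlam.ne', one_mul] at this
    exact this
  have htend : Tendsto (fun g => -Real.exp (-lam * g) / lam) atTop (nhds 0) := by
    have h2 : Tendsto (fun g : ℝ => lam * g) atTop atTop := by
      simpa using tendsto_id.const_mul_atTop hlam
    have : Tendsto (fun g : ℝ => Real.exp (-lam * g)) atTop (nhds 0) := by
      simpa [Function.comp_def, neg_mul] using Real.tendsto_exp_neg_atTop_nhds_zero.comp h2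
    simpa using (this.neg).div_const lam
  have := integral_Ioi_of_hasDerivAt_of_tendsto
    ((Continuous.div_const (by fun_prop) lam).continuousWithinAt)
    h (exp_neg_integrableOn_Ioi b hlam) htend
  rw [this]
  ring

lemma F_tail_bound (hlam : 0 < lam) (hc : 0 < c) {b : ℝ} (hb : 0 < b) :
    F lam c b ≤ 1 / (lam * Real.log (1 + c * b)) := by
  have hL : 0 < Real.log (1 + c * b) := log_pos' hc hb
  have h1 : F lam c b ≤ ∫ g in Set.Ioi b, Real.exp (-lam * g) / Real.log (1 + c * b) := by
    apply setIntegral_mono_on (f_integrable hlam hc hb)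
      ((exp_neg_integrableOn_Ioi b hlam).div_const _) measurableSet_Ioi
    intro x hx
    have hx' : 0 < x := lt_trans hb hx
    apply div_le_div_of_nonneg_left (Real.exp_pos _).le hL
    exact Real.log_le_log (by positivity) (by nlinarith [le_of_lt hx.out])
  calc F lam c b ≤ ∫ g in Set.Ioi b, Real.exp (-lam * g) / Real.log (1 + c * b) := h1
    _ = (Real.exp (-lam * b) / lam) / Real.log (1 + c * b) := by
        rw [MeasureTheory.integral_div, integral_exp_Ioi hlam]
    _ ≤ 1 / (lam * Real.log (1 + c * b)) := by
        rw [div_div, div_le_div_iff₀ (by positivity) (by positivity)]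
        nlinarith [Real.exp_le_one_iff.2 (by nlinarith : -lam * b ≤ 0), mul_pos hlam hL]

lemma F_head_bound (hlam : 0 < lam) (hc : 0 < c) {a b : ℝ} (ha : 0 < a) (hab : a ≤ b) :
    (∫ g in Set.Ioc a b, f lam c g) ≤ (b - a) * f lam c a := by
  have h1 : (∫ g in Set.Ioc a b, f lam c g) ≤ ∫ _g in Set.Ioc a b, f lam c a := by
    apply setIntegral_mono_on
      ((f_integrable hlam hc ha).mono Set.Ioc_subset_Ioi_self le_rfl)
      (integrableOn_const measure_Ioc_lt_top.ne) measurableSet_Ioc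
    intro x hx
    exact f_anti hlam hc ha (le_of_lt hx.1)
  rw [setIntegral_const, Real.volume_real_Ioc_of_le hab, smul_eq_mul] at h1
  exact h1

set_option maxHeartbeats 1000000 in
lemma Xi_neg_small (hlam : 0 < lam) (hc : 0 < c) {xd : ℝ} (hxd : 0 < xd) :
    ∃ a : ℝ, 0 < a ∧ a < xd ∧ Xi lam c a < 0 := by
  set s : ℝ := (1/2) * min (min 1 (1/(4*lam))) (min (Real.exp (-lam)/(4*(1+c))) (Real.sqrt xd))
    with hs_def
  have hs0 : 0 < s := by
    apply mul_pos (by norm_num)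
    apply lt_min (lt_min one_pos (by positivity))
    exact lt_min (by positivity) (Real.sqrt_pos.2 hxd)
  have hs1 : s ≤ 1 := by
    have := min_le_left (min 1 (1/(4*lam))) (min (Real.exp (-lam)/(4*(1+c))) (Real.sqrt xd))
    have := min_le_left (1:ℝ) (1/(4*lam))
    simp only [hs_def]
    nlinarith [min_le_left (min 1 (1/(4*lam))) (min (Real.exp (-lam)/(4*(1+c))) (Real.sqrt xd)),
      min_le_left (1:ℝ) (1/(4*lam))]
  have hs2 : 2 * lam * s ≤ 1 / 2 := by
    have h1 := min_le_left (min 1 (1/(4*lam))) (min (Real.exp (-lam)/(4*(1+c))) (Real.sqrt xd))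
    have h2 := min_le_right (1:ℝ) (1/(4*lam))
    have : s ≤ (1/2) * (1/(4*lam)) := by
      simp only [hs_def]
      nlinarith
    have hmul : lam * (1/(4*lam)) = 1/4 := by field_simp
    nlinarith [mul_pos hlam hs0, mul_le_mul_of_nonneg_left this (le_of_lt hlam)]
  have hs3 : 4 * (1 + c) * s < Real.exp (-lam) := by
    have h1 := min_le_right (min 1 (1/(4*lam))) (min (Real.exp (-lam)/(4*(1+c))) (Real.sqrt xd))
    have h2 := min_le_left (Real.exp (-lam)/(4*(1+c))) (Real.sqrt xd)
    have hss : s ≤ (1/2) * (Real.exp (-lam)/(4*(1+c))) := by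
      simp only [hs_def]; nlinarith
    have hec : 0 < Real.exp (-lam) / (4*(1+c)) := by positivity
    have hmul : (4*(1+c)) * (Real.exp (-lam)/(4*(1+c))) = Real.exp (-lam) := by
      field_simp
    nlinarith [mul_le_mul_of_nonneg_left hss (by positivity : (0:ℝ) ≤ 4*(1+c))]
  have hs4 : s < Real.sqrt xd := by
    have h1 := min_le_right (min 1 (1/(4*lam))) (min (Real.exp (-lam)/(4*(1+c))) (Real.sqrt xd))
    have h2 := min_le_right (Real.exp (-lam)/(4*(1+c))) (Real.sqrt xd)
    have hsq : 0 < Real.sqrt xd := Real.sqrt_pos.2 hxd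
    simp only [hs_def]; nlinarith
  clear_value s
  refine ⟨s^2, by positivity, ?_, ?_⟩
  · calc s^2 < (Real.sqrt xd)^2 := by nlinarith
      _ = xd := Real.sq_sqrt hxd.le
  · set a := s^2 with ha_def
    have ha0 : 0 < a := by positivity
    have has : a ≤ s := by nlinarith
    have ha1 : a ≤ 1 := by nlinarith
    set L := Real.log (1 + c * s) with hL_def
    have hL0 : 0 < L := log_pos' hc hs0
    clear_value a L
    have e1 : Xi lam c a ≤ 2*lam*s*(f lam c a) + 2/L - (f lam c a) := by
      have h1 : F lam c a ≤ (s - a) * f lam c a + 1/(lam * L) := by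
        rw [F_split hlam hc ha0 has]
        have htail : F lam c s ≤ 1/(lam*L) := by rw [hL_def]; exact F_tail_bound hlam hc hs0
        exact add_le_add (F_head_bound hlam hc ha0 has) htail
      have h2 : 2 * lam * (1/(lam*L)) = 2/L := by
        field_simp
      have hfa := f_pos (lam := lam) hc ha0
      calc Xi lam c a = 2*lam*(F lam c a) - f lam c a := rfl
        _ ≤ 2*lam*((s - a) * f lam c a + 1/(lam * L)) - f lam c a := by
            nlinarith [mul_le_mul_of_nonneg_left h1 (by positivity : (0:ℝ) ≤ 2*lam)]
        _ ≤ 2*lam*(s * f lam c a + 1/(lam * L)) - f lam c a := by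
            nlinarith [mul_pos (mul_pos hlam ha0) hfa]
        _ = 2*lam*s*(f lam c a) + 2*lam*(1/(lam*L)) - f lam c a := by ring
        _ = 2*lam*s*(f lam c a) + 2/L - f lam c a := by rw [h2]
    have hfa := f_pos (lam := lam) hc ha0
    have e3 : 2*lam*s*(f lam c a) ≤ (1/2) * f lam c a := by nlinarith
    have e4 : 2/L ≤ 2*(1+c)/(c*s) := by
      have hlb : c*s/(1+c) ≤ L := by
        rw [hL_def]
        refine le_trans ?_ (log_lb hc hs0)
        apply div_le_div_of_nonneg_left (by positivity) (by positivity)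
        nlinarith
      have h0 : 0 < c*s/(1+c) := by positivity
      calc 2/L ≤ 2/(c*s/(1+c)) := div_le_div_of_nonneg_left (by norm_num) h0 hlb
        _ = 2*(1+c)/(c*s) := by field_simp
    have e5 : Real.exp (-lam)/(c*a) ≤ f lam c a := by
      have hLa : Real.log (1 + c * a) ≤ c * a := log_ub hc ha0
      have hLa0 : 0 < Real.log (1 + c * a) := log_pos' hc ha0
      have hexp : Real.exp (-lam) ≤ Real.exp (-lam * a) :=
        Real.exp_le_exp.2 (by nlinarith)
      exact div_le_div₀ (Real.exp_pos _).le hexp hLa0 hLa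
    have e6 : 2*(1+c)/(c*s) < (1/2) * (Real.exp (-lam)/(c*a)) := by
      rw [ha_def, div_lt_iff₀ (by positivity), ← sub_pos]
      have key : (1/2) * (Real.exp (-lam)/(c*s^2)) * (c*s) - 2*(1+c)
          = (Real.exp (-lam) - 4*(1+c)*s) / (2*s) := by
        field_simp
        ring
      rw [key]
      exact div_pos (by linarith) (by positivity)
    linarith [e1, e3, e4, e5, e6]

end XiLem2Aux

/-- Unique zero and sign pattern of `Ξ₁` (step in the proof of Lemma 2): with
`Ξ₁(G) = 2λ·∫_G^∞ e^{−λg}/ln(1+c·g) dg − e^{−λG}/ln(1+c·G)` and `x†` the unique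
zero in `(0, ∞)` of `x ↦ c − λ·(1+c·x)·ln(1+c·x)`, there exists a unique `G‡ > 0`
with `Ξ₁(G‡) = 0`; moreover `G‡ ≤ x†`, `Ξ₁ < 0` on `(0, G‡)` and `Ξ₁ > 0` on
`(G‡, ∞)`. -/
theorem Xi1_unique_zero_sign_pattern (lam c : ℝ) (hlam : 0 < lam) (hc : 0 < c)
    (xd : ℝ) (hxd : 0 < xd)
    (hzero : c - lam * (1 + c * xd) * Real.log (1 + c * xd) = 0)
    (huniq : ∀ y : ℝ, 0 < y → c - lam * (1 + c * y) * Real.log (1 + c * y) = 0 → y = xd) :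
    ∃ Gd : ℝ, 0 < Gd ∧
      (2 * lam * (∫ g in Set.Ioi Gd, Real.exp (-lam * g) / Real.log (1 + c * g)) -
        Real.exp (-lam * Gd) / Real.log (1 + c * Gd) = 0) ∧
      (∀ G : ℝ, 0 < G →
        2 * lam * (∫ g in Set.Ioi G, Real.exp (-lam * g) / Real.log (1 + c * g)) -
          Real.exp (-lam * G) / Real.log (1 + c * G) = 0 → G = Gd) ∧
      Gd ≤ xd ∧
      (∀ G : ℝ, 0 < G → G < Gd →
        2 * lam * (∫ g in Set.Ioi G, Real.exp (-lam * g) / Real.log (1 + c * g)) -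
          Real.exp (-lam * G) / Real.log (1 + c * G) < 0) ∧
      (∀ G : ℝ, Gd < G →
        0 < 2 * lam * (∫ g in Set.Ioi G, Real.exp (-lam * g) / Real.log (1 + c * g)) -
          Real.exp (-lam * G) / Real.log (1 + c * G)) := by
  classical
  open XiLem2Aux in
  have hXi_eq : ∀ G : ℝ, XiLem2Aux.Xi lam c G
      = 2 * lam * (∫ g in Set.Ioi G, Real.exp (-lam * g) / Real.log (1 + c * g)) -
        Real.exp (-lam * G) / Real.log (1 + c * G) := fun G => rfl
  have hpsi0 : XiLem2Aux.psi lam c xd = 0 := hzero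
  -- negative point
  obtain ⟨a, ha0, haxd, haneg⟩ := XiLem2Aux.Xi_neg_small hlam hc hxd
  -- positive at xd
  have hpos_xd : 0 < XiLem2Aux.Xi lam c xd :=
    XiLem2Aux.Xi_pos_of_ge hlam hc hxd hpsi0 le_rfl
  -- continuity on [a, xd]
  have hcont : ContinuousOn (XiLem2Aux.Xi lam c) (Set.Icc a xd) := fun x hx =>
    (XiLem2Aux.hasDerivAt_Xi hlam hc (lt_of_lt_of_le ha0 hx.1)).continuousAt.continuousWithinAt
  -- IVT
  have hivt := intermediate_value_Icc haxd.le hcont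
  have h0mem : (0:ℝ) ∈ Set.Icc (XiLem2Aux.Xi lam c a) (XiLem2Aux.Xi lam c xd) :=
    ⟨haneg.le, hpos_xd.le⟩
  obtain ⟨Gd, hGdmem, hGdzero⟩ := hivt h0mem
  have hGd0 : 0 < Gd := lt_of_lt_of_le ha0 hGdmem.1
  have hGdxd : Gd ≤ xd := hGdmem.2
  have hGdltxd : Gd < xd := by
    rcases lt_or_eq_of_le hGdxd with h | h
    · exact h
    · exfalso; rw [h] at hGdzero; rw [hGdzero] at hpos_xd; exact lt_irrefl 0 hpos_xd
  have hmono := XiLem2Aux.Xi_strictMono hlam hc hxd hpsi0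
  have hGdmemIoc : Gd ∈ Set.Ioc 0 xd := ⟨hGd0, hGdxd⟩
  -- sign pattern
  have hneg : ∀ G : ℝ, 0 < G → G < Gd → XiLem2Aux.Xi lam c G < 0 := by
    intro G hG hGlt
    have : XiLem2Aux.Xi lam c G < XiLem2Aux.Xi lam c Gd :=
      hmono ⟨hG, le_of_lt (lt_of_lt_of_le hGlt hGdxd)⟩ hGdmemIoc hGlt
    rw [hGdzero] at this
    exact this
  have hpos : ∀ G : ℝ, Gd < G → 0 < XiLem2Aux.Xi lam c G := by
    intro G hGgt
    rcases le_or_gt G xd with h | h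
    · have : XiLem2Aux.Xi lam c Gd < XiLem2Aux.Xi lam c G :=
        hmono hGdmemIoc ⟨lt_trans hGd0 hGgt, h⟩ hGgt
      rw [hGdzero] at this
      exact this
    · exact XiLem2Aux.Xi_pos_of_ge hlam hc hxd hpsi0 h.le
  refine ⟨Gd, hGd0, ?_, ?_, hGdxd, ?_, ?_⟩
  · rw [← hXi_eq]; exact hGdzero
  · intro G hG hGz
    rw [← hXi_eq] at hGz
    rcases lt_trichotomy G Gd with h | h | h
    · exact absurd hGz (ne_of_lt (hneg G hG h))
    · exact h
    · exact absurd hGz.symm (ne_of_lt (hpos G h))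
  · intro G hG hGlt
    rw [← hXi_eq]
    exact hneg G hG hGlt
  · intro G hGgt
    rw [← hXi_eq]
    exact hpos G hGgt
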